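/- Every shrewd cardinal is a strong limit cardinal: if κ is shrewd and μ < κ, then 2^μ < κ. -/

import Mathlib

universe u

open Cardinal

/-- Formulas of the language of set theory with an additional unary predicate
symbol `pred`; variables are indexed by natural numbers. -/
inductive SF : Type
  | mem : ℕ → ℕ → SF
  | eq : ℕ → ℕ → SF
  | pred : ℕ → SF
  | not : SF → SF
  | and : SF → SF → SF
  | ex : ℕ → SF → SF

/-- The free variables of a formula. -/
def SF.fv : SF → Set ℕ
  | .mem i j => {i, j}
  | .eq i j => {i, j}
  | .pred i => {i}
  | .not φ => φ.fv
  | .and φ ψ => φ.fv ∪ ψ.fv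
  | .ex k φ => φ.fv \ {k}

/-- Tarskian satisfaction of a formula in the structure whose carrier is the
class `S`, where the membership symbol is interpreted by the binary relation `E`
and the extra unary predicate symbol by the class `P`, under the valuation `v`. -/
def Sat (P : Set ZFSet.{u}) (E : ZFSet.{u} → ZFSet.{u} → Prop) (S : Set ZFSet.{u}) :
    SF → (ℕ → ZFSet.{u}) → Prop
  | .mem i j, v => E (v i) (v j)
  | .eq i j, v => v i = v j
  | .pred i, v => v i ∈ P
  | .not φ, v => ¬ Sat P E S φ v
  | .and φ ψ, v => Sat P E S φ v ∧ Sat P E S ψ v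
  | .ex k φ, v => ∃ x, x ∈ S ∧ Sat P E S φ (Function.update v k x)

/-- Satisfaction in the `∈`-structure with carrier `S`, the predicate symbol
being interpreted by the class `R`. -/
def SatIn (R : Set ZFSet.{u}) (S : Set ZFSet.{u}) (φ : SF) (v : ℕ → ZFSet.{u}) : Prop :=
  Sat R (· ∈ ·) S φ v

/-- Δ₀-formulas: built from atomic formulas by propositional connectives and
bounded existential quantification. -/
inductive IsDeltaZero : SF → Prop
  | mem (i j) : IsDeltaZero (.mem i j)
  | eq (i j) : IsDeltaZero (.eq i j)
  | pred (i) : IsDeltaZero (.pred i)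
  | not {φ} : IsDeltaZero φ → IsDeltaZero (.not φ)
  | and {φ ψ} : IsDeltaZero φ → IsDeltaZero ψ → IsDeltaZero (.and φ ψ)
  | bex {φ} (k j) : IsDeltaZero φ → IsDeltaZero (.ex k (.and (.mem k j) φ))

mutual
  /-- Σₙ-formulas of the Lévy hierarchy. -/
  inductive IsSigma : ℕ → SF → Prop
    | of_zero {φ} : IsDeltaZero φ → IsSigma 0 φ
    | of_pi {n φ} : IsPi n φ → IsSigma (n + 1) φ
    | ex {n φ} (k) : IsSigma (n + 1) φ → IsSigma (n + 1) (.ex k φ)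
  /-- Πₙ-formulas of the Lévy hierarchy. -/
  inductive IsPi : ℕ → SF → Prop
    | of_zero {φ} : IsDeltaZero φ → IsPi 0 φ
    | not {n φ} : IsSigma (n + 1) φ → IsPi (n + 1) (.not φ)
end

/-- The valuation sending `v₀` to `a`, `v₁` to `b` and all other variables to `∅`. -/
def val2 (a b : ZFSet.{u}) : ℕ → ZFSet.{u} := fun i => if i = 0 then a else if i = 1 then b else ∅

/-- `x` is a (von Neumann) ordinal. -/
def ZOrd (x : ZFSet.{u}) : Prop := x.IsTransitive ∧ ∀ y ∈ x, ZFSet.IsTransitive y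

/-- `κ` is a (von Neumann) cardinal. -/
def ZCard (κ : ZFSet.{u}) : Prop := ZOrd κ ∧ ∀ β ∈ κ, #β.toSet < #κ.toSet

/-- `κ` is an infinite cardinal. -/
def InfCard (κ : ZFSet.{u}) : Prop := ZCard κ ∧ ZFSet.omega ⊆ κ

/-- `κ` is an infinite regular cardinal: every cofinal subset of `κ` has
cardinality `κ`. -/
def ZRegular (κ : ZFSet.{u}) : Prop :=
  InfCard κ ∧ ∀ x : ZFSet.{u}, x ⊆ κ →
    (∀ β ∈ κ, ∃ γ ∈ x, β ∈ γ ∨ β = γ) → #x.toSet = #κ.toSet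

/-- `C` is a closed unbounded (class of) subset(s) of the ordinal `κ`. -/
def ZClub (C : Set ZFSet.{u}) (κ : ZFSet.{u}) : Prop :=
  (∀ γ ∈ C, γ ∈ κ) ∧ (∀ β ∈ κ, ∃ γ ∈ C, β ∈ γ) ∧
    (∀ β ∈ κ, (∃ γ, γ ∈ β) → (∀ γ ∈ β, ∃ δ ∈ C, γ ∈ δ ∧ δ ∈ β) → β ∈ C)

/-- `S` is stationary in `κ`: it meets every closed unbounded subset of `κ`. -/
def ZStationary (S : Set ZFSet.{u}) (κ : ZFSet.{u}) : Prop :=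
  ∀ C, ZClub C κ → ∃ γ ∈ C, γ ∈ S

/-- `H(θ)`: the class of all sets hereditarily of cardinality less than `θ`. -/
def HSet (θ : ZFSet.{u}) : Set ZFSet.{u} :=
  {x | ∃ t : ZFSet.{u}, t.IsTransitive ∧ x ⊆ t ∧ #t.toSet < #θ.toSet}

/-- `θ` is the cardinal successor `κ⁺` of `κ`. -/
def SuccCardOf (θ κ : ZFSet.{u}) : Prop :=
  ZCard θ ∧ κ ∈ θ ∧ ∀ μ, ZCard μ → κ ∈ μ → θ ⊆ μ

/-- `κ` is a weakly shrewd cardinal. -/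
def WeaklyShrewd (κ : ZFSet.{u}) : Prop :=
  InfCard κ ∧
    ∀ (φ : SF) (θ A : ZFSet.{u}), φ.fv ⊆ {0, 1} → ZCard θ → κ ∈ θ → A ⊆ κ →
      SatIn ∅ (HSet θ) φ (val2 A κ) →
      ∃ κ' θ' : ZFSet.{u}, ZCard κ' ∧ ZCard θ' ∧ κ' ∈ θ' ∧ κ' ∈ κ ∧
        SatIn ∅ (HSet θ') φ (val2 (A ∩ κ') κ')

/-- `j` is an elementary embedding of the `∈`-structure (with predicate `R`)
with carrier `X` into the one with carrier `Y`. -/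
def ElemEmbOn (R : Set ZFSet.{u}) (X Y : Set ZFSet.{u}) (j : ZFSet.{u} → ZFSet.{u}) : Prop :=
  (∀ x ∈ X, j x ∈ Y) ∧
    ∀ (φ : SF) (v : ℕ → ZFSet.{u}), (∀ i, v i ∈ X) →
      (SatIn R X φ v ↔ SatIn R Y φ (fun i => j (v i)))

/-- `X` is an elementary submodel of `Y` (as `∈`-structures with predicate `R`). -/
def ElemSub (R : Set ZFSet.{u}) (X Y : Set ZFSet.{u}) : Prop :=
  X ⊆ Y ∧ ∀ (φ : SF) (v : ℕ → ZFSet.{u}), (∀ i, v i ∈ X) → (SatIn R X φ v ↔ SatIn R Y φ v)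

/-- `X` is a Σₙ-elementary submodel of `Y`. -/
def SigmaElemSub (R : Set ZFSet.{u}) (n : ℕ) (X Y : Set ZFSet.{u}) : Prop :=
  X ⊆ Y ∧ ∀ (φ : SF), IsSigma n φ → ∀ (v : ℕ → ZFSet.{u}), (∀ i, v i ∈ X) →
    (SatIn R X φ v ↔ SatIn R Y φ v)

/-- The stages of the von Neumann hierarchy, as classes:
`Vclass o` consists of all sets of rank less than `o`. -/
def Vclass (o : Ordinal.{u}) : Set ZFSet.{u} := {x | ZFSet.rank x < o}

/-- The intersection `A ∩ V_c` (for `c` an ordinal). -/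
def Vres (A c : ZFSet.{u}) : ZFSet.{u} :=
  ZFSet.sep (fun y => ZFSet.rank y < ZFSet.rank c) A

/-- `κ` is a shrewd cardinal (Rathjen): for every formula `Φ(v₀,v₁)`, every
ordinal `α` and every `A ⊆ V_κ` such that `Φ(A,κ)` holds in `V_{κ+α}`, there
are ordinals `κ̄, ᾱ < κ` such that `Φ(A ∩ V_κ̄, κ̄)` holds in `V_{κ̄+ᾱ}`. -/
def Shrewd (κ : ZFSet.{u}) : Prop :=
  ZCard κ ∧
    ∀ (φ : SF) (α A : ZFSet.{u}), φ.fv ⊆ {0, 1} → ZOrd α →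
      (∀ y ∈ A, ZFSet.rank y < ZFSet.rank κ) →
      SatIn ∅ (Vclass (ZFSet.rank κ + ZFSet.rank α)) φ (val2 A κ) →
      ∃ κ' α' : ZFSet.{u}, κ' ∈ κ ∧ α' ∈ κ ∧
        SatIn ∅ (Vclass (ZFSet.rank κ' + ZFSet.rank α')) φ (val2 (Vres A κ') κ')


/-! ### Auxiliary material for the proof -/

/-- Transitivity of a class of sets. -/
def STrans (S : Set ZFSet.{u}) : Prop := ∀ ⦃x y : ZFSet.{u}⦄, x ∈ S → y ∈ x → y ∈ S

theorem vclass_strans (o : Ordinal.{u}) : STrans (Vclass o) :=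
  fun _x _y hx hy => lt_trans (ZFSet.rank_lt_of_mem hy) hx

theorem mem_vclass_iff {o : Ordinal.{u}} {x : ZFSet.{u}} :
    x ∈ Vclass o ↔ ZFSet.rank x < o := Iff.rfl

theorem omax_add (a b c : Ordinal.{u}) : max a b + c = max (a + c) (b + c) := by
  rcases le_total a b with h | h
  · rw [max_eq_right h, max_eq_right (add_le_add_left h c)]
  · rw [max_eq_left h, max_eq_left (add_le_add_left h c)]

theorem rank_zsucc (a : ZFSet.{u}) : ZFSet.rank (insert a a) = ZFSet.rank a + 1 := by
  rw [ZFSet.rank_insert, ← Ordinal.add_one_eq_succ]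
  exact max_eq_left (le_self_add)

theorem rank_kpair (x y : ZFSet.{u}) :
    ZFSet.rank (ZFSet.pair x y) = max (ZFSet.rank x) (ZFSet.rank y) + 1 + 1 := by
  rw [show ZFSet.pair x y = {{x}, {x, y}} from rfl, ZFSet.rank_pair, ZFSet.rank_singleton,
    ZFSet.rank_pair]
  simp only [← Ordinal.add_one_eq_succ]
  rw [← omax_add, ← omax_add, ← omax_add, max_eq_right (le_max_left _ _)]

/-! #### von Neumann ordinal basics -/

theorem zord_mem {a b : ZFSet.{u}} (ha : ZOrd a) (hb : b ∈ a) : ZOrd b :=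
  ⟨ha.2 b hb, fun y hy => ha.2 y (ha.1 b hb hy)⟩

theorem zord_empty : ZOrd (∅ : ZFSet.{u}) :=
  ⟨ZFSet.isTransitive_empty, fun y hy => absurd hy (ZFSet.notMem_empty y)⟩

theorem zord_tricho : ∀ a : ZFSet.{u}, ZOrd a → ∀ b : ZFSet.{u}, ZOrd b →
    a ∈ b ∨ a = b ∨ b ∈ a := by
  intro a
  induction a using ZFSet.inductionOn with
  | _ a iha =>
  intro ha b
  induction b using ZFSet.inductionOn with
  | _ b ihb =>
  intro hb
  have h1 : a ⊆ b ∨ b ∈ a := by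
    by_cases hc : ∀ x ∈ a, x ∈ b
    · exact Or.inl hc
    · push_neg at hc
      obtain ⟨x, hx, hxb⟩ := hc
      rcases iha x hx (zord_mem ha hx) b hb with h | h | h
      · exact absurd h hxb
      · exact Or.inr (h ▸ hx)
      · exact Or.inr (ha.1 x hx h)
  have h2 : b ⊆ a ∨ a ∈ b := by
    by_cases hc : ∀ x ∈ b, x ∈ a
    · exact Or.inl hc
    · push_neg at hc
      obtain ⟨x, hx, hxa⟩ := hc
      rcases ihb x hx (zord_mem hb hx) with h | h | h
      · exact Or.inr (hb.1 x hx h)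
      · exact Or.inr (h ▸ hx)
      · exact absurd h hxa
  rcases h1 with h1 | h1
  · rcases h2 with h2 | h2
    · exact Or.inr (Or.inl (ZFSet.ext fun z => ⟨fun hz => h1 hz, fun hz => h2 hz⟩))
    · exact Or.inl h2
  · exact Or.inr (Or.inr h1)

theorem mem_of_zord_ne_empty {a : ZFSet.{u}} (ha : ZOrd a) (h : a ≠ ∅) : ∅ ∈ a := by
  rcases zord_tricho ∅ zord_empty a ha with h' | h' | h'
  · exact h'
  · exact absurd h'.symm h
  · exact absurd h' (ZFSet.notMem_empty a)

theorem zord_succ {a : ZFSet.{u}} (ha : ZOrd a) : ZOrd (insert a a) := by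
  constructor
  · intro y hy
    rcases ZFSet.mem_insert_iff.1 hy with rfl | hy'
    · exact fun z hz => ZFSet.mem_insert_of_mem _ hz
    · exact fun z hz => ZFSet.mem_insert_of_mem _ (ha.1 y hy' hz)
  · intro y hy
    rcases ZFSet.mem_insert_iff.1 hy with rfl | hy'
    · exact ha.1
    · exact ha.2 y hy'

/-- A shrewd cardinal is not a successor ordinal. -/
theorem shrewd_not_succ {κ : ZFSet.{u}} (h : Shrewd κ) (δ : ZFSet.{u}) :
    κ ≠ insert δ δ := by
  intro hk
  obtain ⟨hcard, hrefl⟩ := h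
  have hδ : δ ∈ κ := hk ▸ ZFSet.mem_insert δ δ
  obtain ⟨κ', α', hκ', hα', hsat⟩ :=
    hrefl (SF.ex 2 (SF.mem 2 0)) ∅ {δ}
      (by intro n hn; simp [SF.fv] at hn ⊢; omega)
      zord_empty
      (by intro y hy; rw [ZFSet.mem_singleton.1 hy]; exact ZFSet.rank_lt_of_mem hδ)
      (by
        refine ⟨δ, ?_, ?_⟩
        · exact lt_of_lt_of_le (ZFSet.rank_lt_of_mem hδ) (le_self_add)
        · simp only [Sat, Function.update_apply, val2]
          norm_num)
  obtain ⟨x, hxS, hx⟩ := hsat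
  simp only [Sat, Function.update_apply, val2] at hx
  norm_num at hx
  rw [Vres, ZFSet.mem_sep] at hx
  obtain ⟨hx1, hx2⟩ := hx
  rw [ZFSet.mem_singleton.1 hx1] at hx2
  rw [hk] at hκ'
  rcases ZFSet.mem_insert_iff.1 hκ' with rfl | hκ'
  · exact absurd hx2 (lt_irrefl _)
  · exact absurd (lt_trans hx2 (ZFSet.rank_lt_of_mem hκ')) (lt_irrefl _)

theorem zord_limit {κ : ZFSet.{u}} (hk : ZOrd κ) (hns : ∀ δ : ZFSet.{u}, κ ≠ insert δ δ)
    {β : ZFSet.{u}} (hβ : β ∈ κ) : insert β β ∈ κ := by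
  rcases zord_tricho (insert β β) (zord_succ (zord_mem hk hβ)) κ hk with h | h | h
  · exact h
  · exact absurd h.symm (hns β)
  · have h1 : ZFSet.rank κ < ZFSet.rank β + 1 := by
      rw [← rank_zsucc]; exact ZFSet.rank_lt_of_mem h
    have h2 : ZFSet.rank β < ZFSet.rank κ := ZFSet.rank_lt_of_mem hβ
    rw [Ordinal.add_one_eq_succ, Order.lt_succ_iff] at h1
    exact absurd h2 (not_lt.2 h1)


/-! #### Concrete formulas and their satisfaction -/

/-- `v a ⊆ v b` (with `c` a fresh variable). -/
def sfSub (a b c : ℕ) : SF :=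
  .not (.ex c (.and (.mem c a) (.not (.mem c b))))

/-- `v a = {v b}` (with `c` a fresh variable). -/
def sfSing (a b c : ℕ) : SF :=
  .and (.mem b a) (.not (.ex c (.and (.mem c a) (.not (.eq c b)))))

/-- `v a = {v b, v c}` (with `d` a fresh variable). -/
def sfUPair (a b c d : ℕ) : SF :=
  .and (.and (.mem b a) (.mem c a))
    (.not (.ex d (.and (.mem d a) (.and (.not (.eq d b)) (.not (.eq d c))))))

/-- `v p ∈ v 0` and `v p` is the Kuratowski pair `⟨v x, v y⟩`,
witnessed by `v s = {v x}` and `v t = {v x, v y}`. -/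
def sfIsPair (p s t x y c : ℕ) : SF :=
  .and (.and (.mem p 0) (sfSing s x c)) (.and (sfUPair t x y c) (sfUPair p s t c))

theorem sat_sfSub {S : Set ZFSet.{u}} {v : ℕ → ZFSet.{u}} {a b c : ℕ}
    (hS : STrans S) (hac : a ≠ c) (hbc : b ≠ c) (ha : v a ∈ S) :
    Sat ∅ (· ∈ ·) S (sfSub a b c) v ↔ v a ⊆ v b := by
  simp only [sfSub, Sat, Function.update_self, Function.update_of_ne hac,
    Function.update_of_ne hbc]
  constructor
  · intro h z hz
    by_contra hzb
    exact h ⟨z, hS ha hz, hz, hzb⟩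
  · rintro h ⟨z, _, hz1, hz2⟩
    exact hz2 (h hz1)

theorem sat_sfSing {S : Set ZFSet.{u}} {v : ℕ → ZFSet.{u}} {a b c : ℕ}
    (hS : STrans S) (hac : a ≠ c) (hbc : b ≠ c) (ha : v a ∈ S) :
    Sat ∅ (· ∈ ·) S (sfSing a b c) v ↔ v a = {v b} := by
  simp only [sfSing, Sat, Function.update_self, Function.update_of_ne hac,
    Function.update_of_ne hbc]
  constructor
  · rintro ⟨h1, h2⟩
    apply ZFSet.ext
    intro z
    rw [ZFSet.mem_singleton]
    constructor
    · intro hz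
      by_contra hne
      exact h2 ⟨z, hS ha hz, hz, hne⟩
    · rintro rfl
      exact h1
  · intro h
    rw [h]
    refine ⟨ZFSet.mem_singleton.2 rfl, ?_⟩
    rintro ⟨z, _, hz1, hz2⟩
    exact hz2 (ZFSet.mem_singleton.1 hz1)

theorem sat_sfUPair {S : Set ZFSet.{u}} {v : ℕ → ZFSet.{u}} {a b c d : ℕ}
    (hS : STrans S) (had : a ≠ d) (hbd : b ≠ d) (hcd : c ≠ d) (ha : v a ∈ S) :
    Sat ∅ (· ∈ ·) S (sfUPair a b c d) v ↔ v a = {v b, v c} := by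
  simp only [sfUPair, Sat, Function.update_self, Function.update_of_ne had,
    Function.update_of_ne hbd, Function.update_of_ne hcd]
  constructor
  · rintro ⟨⟨h1, h2⟩, h3⟩
    apply ZFSet.ext
    intro z
    rw [ZFSet.mem_pair]
    constructor
    · intro hz
      by_contra hne
      push_neg at hne
      exact h3 ⟨z, hS ha hz, hz, hne.1, hne.2⟩
    · rintro (rfl | rfl)
      · exact h1
      · exact h2
  · intro h
    rw [h]
    refine ⟨⟨ZFSet.mem_pair.2 (Or.inl rfl), ZFSet.mem_pair.2 (Or.inr rfl)⟩, ?_⟩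
    rintro ⟨z, _, hz1, hz2, hz3⟩
    rcases ZFSet.mem_pair.1 hz1 with rfl | rfl
    · exact hz2 rfl
    · exact hz3 rfl

theorem sat_sfIsPair {S : Set ZFSet.{u}} {v : ℕ → ZFSet.{u}} {p s t x y c : ℕ}
    (hS : STrans S) (hpc : p ≠ c) (hsc : s ≠ c) (htc : t ≠ c) (hxc : x ≠ c) (hyc : y ≠ c)
    (hp : v p ∈ S) (hs : v s ∈ S) (ht : v t ∈ S) :
    Sat ∅ (· ∈ ·) S (sfIsPair p s t x y c) v ↔
      v p ∈ v 0 ∧ v s = {v x} ∧ v t = {v x, v y} ∧ v p = {v s, v t} := by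
  have h0 : Sat ∅ (· ∈ ·) S (sfIsPair p s t x y c) v ↔
      (v p ∈ v 0 ∧ Sat ∅ (· ∈ ·) S (sfSing s x c) v) ∧
        (Sat ∅ (· ∈ ·) S (sfUPair t x y c) v ∧ Sat ∅ (· ∈ ·) S (sfUPair p s t c) v) := Iff.rfl
  rw [h0, sat_sfSing hS hsc hxc hs, sat_sfUPair hS htc hxc hyc ht,
    sat_sfUPair hS hpc hsc htc hp]
  tauto

theorem isPair_eq {a s t x y : ZFSet.{u}} (hs : s = {x}) (ht : t = {x, y})
    (ha : a = {s, t}) : a = ZFSet.pair x y := by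
  rw [ha, hs, ht]; rfl

/-- The marker part: some `p ∈ v 0` is the pair `⟨v 2, {v 2}⟩`. -/
def sfM : SF := .ex 3 (.ex 4 (.ex 5 (sfIsPair 5 3 4 2 3 9)))

/-- Some `p ∈ v 0` is a pair `⟨v 6, β⟩`. -/
def sfEX : SF := .ex 7 (.ex 3 (.ex 4 (.ex 5 (sfIsPair 5 3 4 6 7 9))))

/-- Every subset of `v 2` occurs as a first component of a pair in `v 0`. -/
def sfT : SF := .not (.ex 6 (.and (sfSub 6 2 9) (.not sfEX)))

/-- The main formula. -/
def sfPhi : SF := .ex 2 (.and sfM sfT)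

theorem sfPhi_fv : sfPhi.fv ⊆ ({0, 1} : Set ℕ) := by
  intro n hn
  simp only [sfPhi, sfM, sfT, sfEX, sfSub, sfSing, sfUPair, sfIsPair, SF.fv,
    Set.mem_union, Set.mem_diff, Set.mem_insert_iff, Set.mem_singleton_iff] at hn
  simp only [Set.mem_insert_iff, Set.mem_singleton_iff]
  omega


theorem satIn_def {R S : Set ZFSet.{u}} {φ : SF} {v : ℕ → ZFSet.{u}} :
    SatIn R S φ v ↔ Sat R (· ∈ ·) S φ v := Iff.rfl

theorem satIn_ex {R S : Set ZFSet.{u}} {k : ℕ} {φ : SF} {v : ℕ → ZFSet.{u}} :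
    SatIn R S (.ex k φ) v ↔ ∃ x, x ∈ S ∧ SatIn R S φ (Function.update v k x) := Iff.rfl

theorem satIn_and {R S : Set ZFSet.{u}} {φ ψ : SF} {v : ℕ → ZFSet.{u}} :
    SatIn R S (.and φ ψ) v ↔ SatIn R S φ v ∧ SatIn R S ψ v := Iff.rfl

theorem satIn_not {R S : Set ZFSet.{u}} {φ : SF} {v : ℕ → ZFSet.{u}} :
    SatIn R S (.not φ) v ↔ ¬ SatIn R S φ v := Iff.rfl

theorem sat_sfM_intro {S : Set ZFSet.{u}} (hS : STrans S) {v : ℕ → ZFSet.{u}}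
    (h1 : ZFSet.pair (v 2) {v 2} ∈ v 0) (h2 : ZFSet.pair (v 2) {v 2} ∈ S)
    (hsS : ({v 2} : ZFSet.{u}) ∈ S) (htS : ({v 2, {v 2}} : ZFSet.{u}) ∈ S) :
    SatIn ∅ S sfM v := by
  rw [show sfM = .ex 3 (.ex 4 (.ex 5 (sfIsPair 5 3 4 2 3 9))) from rfl, satIn_ex]
  refine ⟨{v 2}, hsS, ?_⟩
  rw [satIn_ex]
  refine ⟨{v 2, {v 2}}, htS, ?_⟩
  rw [satIn_ex]
  refine ⟨ZFSet.pair (v 2) {v 2}, h2, ?_⟩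
  rw [satIn_def, sat_sfIsPair hS (by decide) (by decide) (by decide) (by decide) (by decide)
    (by simpa using h2) (by simpa using hsS) (by simpa using htS)]
  refine ⟨?_, ?_, ?_, ?_⟩ <;> simp [Function.update_apply, ZFSet.pair]
  exact h1

theorem sat_sfM_elim {S : Set ZFSet.{u}} (hS : STrans S) {v : ℕ → ZFSet.{u}}
    (h : SatIn ∅ S sfM v) : ZFSet.pair (v 2) {v 2} ∈ v 0 := by
  rw [show sfM = .ex 3 (.ex 4 (.ex 5 (sfIsPair 5 3 4 2 3 9))) from rfl, satIn_ex] at h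
  obtain ⟨s, hsS, h⟩ := h
  rw [satIn_ex] at h
  obtain ⟨t, htS, h⟩ := h
  rw [satIn_ex] at h
  obtain ⟨p, hpS, h⟩ := h
  rw [satIn_def, sat_sfIsPair hS (by decide) (by decide) (by decide) (by decide) (by decide)
    (by simpa using hpS) (by simpa using hsS) (by simpa using htS)] at h
  simp only [Function.update_apply] at h
  norm_num at h
  obtain ⟨h1, h2, h3, h4⟩ := h
  have hp := isPair_eq h2 h3 h4
  rw [h2] at hp
  rwa [hp] at h1

theorem sat_sfEX_intro {S : Set ZFSet.{u}} (hS : STrans S) {v : ℕ → ZFSet.{u}}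
    (β : ZFSet.{u}) (hβS : β ∈ S) (h1 : ZFSet.pair (v 6) β ∈ v 0)
    (h2 : ZFSet.pair (v 6) β ∈ S) (hsS : ({v 6} : ZFSet.{u}) ∈ S)
    (htS : ({v 6, β} : ZFSet.{u}) ∈ S) :
    SatIn ∅ S sfEX v := by
  rw [show sfEX = .ex 7 (.ex 3 (.ex 4 (.ex 5 (sfIsPair 5 3 4 6 7 9)))) from rfl, satIn_ex]
  refine ⟨β, hβS, ?_⟩
  rw [satIn_ex]
  refine ⟨{v 6}, hsS, ?_⟩
  rw [satIn_ex]
  refine ⟨{v 6, β}, htS, ?_⟩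
  rw [satIn_ex]
  refine ⟨ZFSet.pair (v 6) β, h2, ?_⟩
  rw [satIn_def, sat_sfIsPair hS (by decide) (by decide) (by decide) (by decide) (by decide)
    (by simpa using h2) (by simpa using hsS) (by simpa using htS)]
  refine ⟨?_, ?_, ?_, ?_⟩ <;> simp [Function.update_apply, ZFSet.pair]
  exact h1

theorem sat_sfEX_elim {S : Set ZFSet.{u}} (hS : STrans S) {v : ℕ → ZFSet.{u}}
    (h : SatIn ∅ S sfEX v) : ∃ β : ZFSet.{u}, ZFSet.pair (v 6) β ∈ v 0 := by
  rw [show sfEX = .ex 7 (.ex 3 (.ex 4 (.ex 5 (sfIsPair 5 3 4 6 7 9)))) from rfl, satIn_ex] at h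
  obtain ⟨β, hβS, h⟩ := h
  rw [satIn_ex] at h
  obtain ⟨s, hsS, h⟩ := h
  rw [satIn_ex] at h
  obtain ⟨t, htS, h⟩ := h
  rw [satIn_ex] at h
  obtain ⟨p, hpS, h⟩ := h
  rw [satIn_def, sat_sfIsPair hS (by decide) (by decide) (by decide) (by decide) (by decide)
    (by simpa using hpS) (by simpa using hsS) (by simpa using htS)] at h
  simp only [Function.update_apply] at h
  norm_num at h
  obtain ⟨h1, h2, h3, h4⟩ := h
  exact ⟨β, (isPair_eq h2 h3 h4) ▸ h1⟩

theorem sat_sfT_intro {S : Set ZFSet.{u}} (hS : STrans S) {v : ℕ → ZFSet.{u}}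
    (h : ∀ x, x ∈ S → x ⊆ v 2 → SatIn ∅ S sfEX (Function.update v 6 x)) :
    SatIn ∅ S sfT v := by
  rw [show sfT = .not (.ex 6 (.and (sfSub 6 2 9) (.not sfEX))) from rfl, satIn_not, satIn_ex]
  rintro ⟨x, hxS, hsub, hnEX⟩
  refine hnEX (h x hxS ?_)
  have := (sat_sfSub (v := Function.update v 6 x) hS (by decide) (by decide)
    (by rw [Function.update_self]; exact hxS)).1 hsub
  rwa [Function.update_self, Function.update_of_ne (by decide : (2:ℕ) ≠ 6)] at this

theorem sat_sfT_elim {S : Set ZFSet.{u}} (hS : STrans S) {v : ℕ → ZFSet.{u}}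
    (h : SatIn ∅ S sfT v) {x : ZFSet.{u}} (hxS : x ∈ S) (hsub : x ⊆ v 2) :
    SatIn ∅ S sfEX (Function.update v 6 x) := by
  rw [show sfT = .not (.ex 6 (.and (sfSub 6 2 9) (.not sfEX))) from rfl, satIn_not, satIn_ex] at h
  by_contra hno
  refine h ⟨x, hxS, ?_, hno⟩
  rw [sat_sfSub hS (by decide) (by decide)
    (by rw [Function.update_self]; exact hxS)]
  rwa [Function.update_self, Function.update_of_ne (by decide : (2:ℕ) ≠ 6)]

theorem sat_sfPhi_intro {S : Set ZFSet.{u}} {v : ℕ → ZFSet.{u}} (ξ : ZFSet.{u})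
    (hξ : ξ ∈ S) (hM : SatIn ∅ S sfM (Function.update v 2 ξ))
    (hT : SatIn ∅ S sfT (Function.update v 2 ξ)) :
    SatIn ∅ S sfPhi v := by
  rw [show sfPhi = .ex 2 (.and sfM sfT) from rfl, satIn_ex]
  exact ⟨ξ, hξ, satIn_and.2 ⟨hM, hT⟩⟩

theorem sat_sfPhi_elim {S : Set ZFSet.{u}} {v : ℕ → ZFSet.{u}}
    (h : SatIn ∅ S sfPhi v) :
    ∃ ξ, ξ ∈ S ∧ SatIn ∅ S sfM (Function.update v 2 ξ) ∧
      SatIn ∅ S sfT (Function.update v 2 ξ) := by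
  rw [show sfPhi = .ex 2 (.and sfM sfT) from rfl, satIn_ex] at h
  obtain ⟨ξ, hξ, h⟩ := h
  exact ⟨ξ, hξ, satIn_and.1 h⟩

/-- Every shrewd cardinal is a strong limit cardinal: if `κ` is shrewd and
`μ < κ`, then `2^μ < κ`. -/
theorem shrewd_strongLimit (κ : ZFSet.{u}) (h : Shrewd κ) :
    ∀ μ ∈ κ, (2 : Cardinal.{u + 1}) ^ #μ.toSet < #κ.toSet := by
  classical
  intro μ hμκ
  by_contra hlt
  obtain ⟨hcard, hrefl⟩ := h
  have hzk : ZOrd κ := hcard.1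
  have hlim : ∀ β ∈ κ, insert β β ∈ κ := fun β hβ =>
    zord_limit hzk (shrewd_not_succ ⟨hcard, hrefl⟩) hβ
  have hr0 : ∀ β ∈ κ, ZFSet.rank β < ZFSet.rank κ := fun β hβ => ZFSet.rank_lt_of_mem hβ
  have hr1 : ∀ β ∈ κ, ZFSet.rank β + 1 < ZFSet.rank κ := by
    intro β hβ
    have := hr0 _ (hlim β hβ)
    rwa [rank_zsucc] at this
  have hr2 : ∀ β ∈ κ, ZFSet.rank β + 1 + 1 < ZFSet.rank κ := by
    intro β hβ
    have := hr1 _ (hlim β hβ)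
    rwa [rank_zsucc] at this
  have hr3 : ∀ β ∈ κ, ZFSet.rank β + 1 + 1 + 1 < ZFSet.rank κ := by
    intro β hβ
    have := hr2 _ (hlim β hβ)
    rwa [rank_zsucc] at this
  -- a "surjection" from the subsets of `μ` onto `κ`
  have hle : #κ.toSet ≤ #(Set μ.toSet) := by
    rw [Cardinal.mk_set]
    exact not_lt.1 hlt
  obtain ⟨inj⟩ := (Cardinal.le_def _ _).1 hle
  let G : Set μ.toSet → ZFSet.{u} := fun s =>
    ZFSet.sep (fun z => ∃ hz : z ∈ μ, (⟨z, hz⟩ : μ.toSet) ∈ s) μ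
  have hGsub : ∀ s, G s ⊆ μ := fun s z hz => (ZFSet.mem_sep.1 hz).1
  have hGmem : ∀ s z, ∀ hz : z ∈ μ, z ∈ G s ↔ (⟨z, hz⟩ : μ.toSet) ∈ s := by
    intro s z hz
    simp only [G, ZFSet.mem_sep]
    constructor
    · rintro ⟨_, _, hs⟩
      exact hs
    · intro hs
      exact ⟨hz, hz, hs⟩
  have hGinj : Function.Injective G := by
    intro s1 s2 hEq
    apply Set.ext
    rintro ⟨z, hz⟩
    rw [← hGmem s1 z hz, ← hGmem s2 z hz, hEq]
  let F : ZFSet.{u} → ZFSet.{u} := fun x =>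
    if hx : ∃ b : κ.toSet, G (inj b) = x then ((Classical.choose hx : κ.toSet) : ZFSet.{u}) else ∅
  let F' : ZFSet.{u} → ZFSet.{u} := fun x => if x = ∅ then ∅ else F x
  have hκne : κ ≠ ∅ := fun hh => ZFSet.notMem_empty μ (hh ▸ hμκ)
  have hempty : (∅ : ZFSet.{u}) ∈ κ := mem_of_zord_ne_empty hzk hκne
  have hFmem : ∀ x, F x ∈ κ := by
    intro x
    by_cases hx : ∃ b : κ.toSet, G (inj b) = x
    · have hfx : F x = ((Classical.choose hx : κ.toSet) : ZFSet.{u}) := dif_pos hx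
      rw [hfx]
      exact (Classical.choose hx).2
    · have hfx : F x = ∅ := dif_neg hx
      rw [hfx]
      exact hempty
  have hF'mem : ∀ x, F' x ∈ κ := by
    intro x
    simp only [F']
    split
    · exact hempty
    · exact hFmem x
  have hFG : ∀ b : κ.toSet, F (G (inj b)) = (b : ZFSet.{u}) := by
    intro b
    have hex : ∃ b' : κ.toSet, G (inj b') = G (inj b) := ⟨b, rfl⟩
    simp only [F, dif_pos hex]
    have h1 : Classical.choose hex = b := inj.injective (hGinj (Classical.choose_spec hex))
    rw [h1]
  -- the coded set `A`
  let mk0 : ZFSet.{u} := ZFSet.pair μ {μ}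
  haveI hdef : ZFSet.Definable₁ (fun x => ZFSet.pair x (F' x)) := Classical.allZFSetDefinable _
  let A : ZFSet.{u} := insert mk0 (ZFSet.image (fun x => ZFSet.pair x (F' x)) (ZFSet.powerset μ))
  have hmemA : ∀ p : ZFSet.{u},
      p ∈ A ↔ p = mk0 ∨ ∃ x, x ⊆ μ ∧ p = ZFSet.pair x (F' x) := by
    intro p
    simp only [A, ZFSet.mem_insert_iff, ZFSet.mem_image, ZFSet.mem_powerset]
    constructor
    · rintro (rfl | ⟨x, hx, hx2⟩)
      · exact Or.inl rfl
      · exact Or.inr ⟨x, hx, hx2.symm⟩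
    · rintro (rfl | ⟨x, hx, hx2⟩)
      · exact Or.inl rfl
      · exact Or.inr ⟨x, hx, hx2.symm⟩
  have hrmk : ZFSet.rank mk0 = ZFSet.rank μ + 1 + 1 + 1 := by
    rw [show mk0 = ZFSet.pair μ {μ} from rfl, rank_kpair, ZFSet.rank_singleton,
      ← Ordinal.add_one_eq_succ, max_eq_right (le_self_add)]
  have hrpair : ∀ x β : ZFSet.{u}, x ⊆ μ → β ∈ κ →
      ZFSet.rank (ZFSet.pair x β) < ZFSet.rank κ := by
    intro x β hx hβ
    rw [rank_kpair]
    rcases le_total (ZFSet.rank x) (ZFSet.rank β) with hc | hc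
    · rw [max_eq_right hc]
      exact hr2 β hβ
    · rw [max_eq_left hc]
      calc ZFSet.rank x + 1 + 1 ≤ ZFSet.rank μ + 1 + 1 :=
            add_le_add_left (add_le_add_left (ZFSet.rank_mono hx) 1) 1
        _ < ZFSet.rank κ := hr2 μ hμκ
  have hrkA : ∀ y ∈ A, ZFSet.rank y < ZFSet.rank κ := by
    intro y hy
    rcases (hmemA y).1 hy with rfl | ⟨x, hx, rfl⟩
    · rw [hrmk]
      exact hr3 μ hμκ
    · exact hrpair x (F' x) hx (hF'mem x)
  -- truth of `sfPhi` at `κ`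
  have hSk : STrans (Vclass (ZFSet.rank κ)) := vclass_strans _
  have hrsing : ∀ x : ZFSet.{u}, x ⊆ μ → ZFSet.rank ({x} : ZFSet.{u}) < ZFSet.rank κ := by
    intro x hx
    rw [ZFSet.rank_singleton, ← Ordinal.add_one_eq_succ]
    exact lt_of_le_of_lt (add_le_add_left (ZFSet.rank_mono hx) 1) (hr1 μ hμκ)
  have hrdub : ∀ x β : ZFSet.{u}, x ⊆ μ → β ∈ κ →
      ZFSet.rank ({x, β} : ZFSet.{u}) < ZFSet.rank κ := by
    intro x β hx hβ
    rw [ZFSet.rank_pair]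
    simp only [← Ordinal.add_one_eq_succ]
    rcases le_total (ZFSet.rank x + 1) (ZFSet.rank β + 1) with hc | hc
    · rw [max_eq_right hc]
      exact hr1 β hβ
    · rw [max_eq_left hc]
      exact lt_of_le_of_lt (add_le_add_left (ZFSet.rank_mono hx) 1) (hr1 μ hμκ)
  have htruth : SatIn ∅ (Vclass (ZFSet.rank κ + ZFSet.rank (∅ : ZFSet.{u}))) sfPhi
      (val2 A κ) := by
    rw [ZFSet.rank_empty, add_zero]
    refine sat_sfPhi_intro μ (hr0 μ hμκ) ?_ ?_
    · -- marker
      apply sat_sfM_intro hSk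
      · have e2 : Function.update (val2 A κ) 2 μ 2 = μ := by simp
        have e0 : Function.update (val2 A κ) 2 μ 0 = A := by simp [val2]
        rw [e2, e0]
        exact (hmemA mk0).2 (Or.inl rfl)
      · show ZFSet.rank _ < _
        simp only [Function.update_self]
        rw [show ZFSet.pair μ {μ} = mk0 from rfl, hrmk]
        exact hr3 μ hμκ
      · show ZFSet.rank _ < _
        simp only [Function.update_self]
        rw [ZFSet.rank_singleton, ← Ordinal.add_one_eq_succ]
        exact hr1 μ hμκ
      · show ZFSet.rank _ < _
        simp only [Function.update_self]
        rw [ZFSet.rank_pair, ZFSet.rank_singleton]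
        simp only [← Ordinal.add_one_eq_succ]
        rw [max_eq_right (le_self_add)]
        exact hr2 μ hμκ
    · -- totality
      apply sat_sfT_intro hSk
      intro x hxS hxsub
      have hxμ : x ⊆ μ := by
        rwa [Function.update_self] at hxsub
      apply sat_sfEX_intro hSk (F' x)
      · exact hr0 _ (hF'mem x)
      · have e6 : Function.update (Function.update (val2 A κ) 2 μ) 6 x 6 = x := by simp
        have e0 : Function.update (Function.update (val2 A κ) 2 μ) 6 x 0 = A := by
          simp [val2]
        rw [e6, e0]
        exact (hmemA _).2 (Or.inr ⟨x, hxμ, rfl⟩)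
      · show ZFSet.rank _ < _
        simp only [Function.update_self]
        exact hrpair x (F' x) hxμ (hF'mem x)
      · show ZFSet.rank _ < _
        simp only [Function.update_self]
        exact hrsing x hxμ
      · show ZFSet.rank _ < _
        simp only [Function.update_self]
        exact hrdub x (F' x) hxμ (hF'mem x)
  -- apply shrewdness
  obtain ⟨κ', α', hκ', hα', hsat⟩ := hrefl sfPhi ∅ A sfPhi_fv zord_empty hrkA htruth
  set o' : Ordinal.{u} := ZFSet.rank κ' + ZFSet.rank α' with ho'
  have hS' : STrans (Vclass o') := vclass_strans _
  have hκ'o' : ZFSet.rank κ' ≤ o' := le_self_add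
  obtain ⟨ξ, hξS, hM, hT⟩ := sat_sfPhi_elim hsat
  have hMfact := sat_sfM_elim hS' hM
  have e2 : Function.update (val2 (Vres A κ') κ') 2 ξ 2 = ξ := by simp
  have e0 : Function.update (val2 (Vres A κ') κ') 2 ξ 0 = Vres A κ' := by simp [val2]
  rw [e2, e0] at hMfact
  -- `ξ = μ` and the marker rank bound
  rw [Vres, ZFSet.mem_sep] at hMfact
  obtain ⟨hpA, hprk⟩ := hMfact
  have hmark : ξ = μ ∧ ZFSet.rank μ + 1 + 1 + 1 < ZFSet.rank κ' := by
    rcases (hmemA _).1 hpA with hcase | ⟨x, hx, hcase⟩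
    · refine ⟨(ZFSet.pair_injective hcase).1, ?_⟩
      rw [← hrmk, ← hcase]
      exact hprk
    · exfalso
      obtain ⟨rfl, hFx⟩ := ZFSet.pair_injective hcase
      by_cases hxe : ξ = ∅
      · rw [show F' ξ = if ξ = ∅ then ∅ else F ξ from rfl, if_pos hxe] at hFx
        have : ξ ∈ (∅ : ZFSet.{u}) := hFx ▸ ZFSet.mem_singleton.2 rfl
        exact ZFSet.notMem_empty ξ this
      · rw [show F' ξ = if ξ = ∅ then ∅ else F ξ from rfl, if_neg hxe] at hFx
        have htr : ZFSet.IsTransitive (F ξ) := hzk.2 _ (hFmem ξ)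
        rw [← hFx] at htr
        have hmem : ξ ∈ ({ξ} : ZFSet.{u}) := ZFSet.mem_singleton.2 rfl
        have hsub2 : ξ ⊆ ({ξ} : ZFSet.{u}) := htr ξ hmem
        rcases ZFSet.eq_empty_or_nonempty ξ with hc | ⟨z, hz⟩
        · exact hxe hc
        · have hzξ : z = ξ := ZFSet.mem_singleton.1 (hsub2 hz)
          exact ZFSet.mem_irrefl ξ (hzξ ▸ hz)
  obtain ⟨hξμ, hμrk⟩ := hmark
  have e2' : Function.update (val2 (Vres A κ') κ') 2 ξ 2 = μ := e2.trans hξμ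
  have hμκ'0 : ZFSet.rank μ < ZFSet.rank κ' :=
    lt_of_le_of_lt (le_trans (le_self_add)
      (le_trans (le_self_add) (le_self_add))) hμrk
  -- choose a target among `κ'`, `κ'+1`, `κ'+2` whose preimage avoids `∅` and `μ`
  have ht1 : κ' ∈ κ := hκ'
  have ht2 : insert κ' κ' ∈ κ := hlim _ hκ'
  have ht3 : insert (insert κ' κ') (insert κ' κ') ∈ κ := hlim _ ht2
  have hrt2 : ZFSet.rank (insert κ' κ') = ZFSet.rank κ' + 1 := rank_zsucc _
  have hrt3 : ZFSet.rank (insert (insert κ' κ') (insert κ' κ')) = ZFSet.rank κ' + 1 + 1 := by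
    rw [rank_zsucc, hrt2]
  have hlt1 : (ZFSet.rank κ' : Ordinal.{u}) < ZFSet.rank κ' + 1 := by
    rw [Ordinal.add_one_eq_succ]
    exact Order.lt_succ _
  have hne12 : κ' ≠ insert κ' κ' := by
    intro hh
    rw [← hh] at hrt2
    exact absurd hrt2 (ne_of_lt hlt1)
  have hne23 : insert κ' κ' ≠ insert (insert κ' κ') (insert κ' κ') := by
    intro hh
    rw [← hh, hrt2] at hrt3
    have : (ZFSet.rank κ' + 1 : Ordinal.{u}) < ZFSet.rank κ' + 1 + 1 := by
      rw [Ordinal.add_one_eq_succ (ZFSet.rank κ' + 1)]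
      exact Order.lt_succ _
    exact absurd hrt3 (ne_of_lt this)
  have hne13 : κ' ≠ insert (insert κ' κ') (insert κ' κ') := by
    intro hh
    rw [← hh] at hrt3
    have : (ZFSet.rank κ' : Ordinal.{u}) < ZFSet.rank κ' + 1 + 1 :=
      lt_of_lt_of_le hlt1 (le_self_add)
    exact absurd hrt3 (ne_of_lt this)
  -- the three preimages
  let b1 : κ.toSet := ⟨κ', ht1⟩
  let b2 : κ.toSet := ⟨insert κ' κ', ht2⟩
  let b3 : κ.toSet := ⟨insert (insert κ' κ') (insert κ' κ'), ht3⟩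
  let x1 : ZFSet.{u} := G (inj b1)
  let x2 : ZFSet.{u} := G (inj b2)
  let x3 : ZFSet.{u} := G (inj b3)
  have hb12 : b1 ≠ b2 := fun hh => hne12 (congrArg Subtype.val hh)
  have hb13 : b1 ≠ b3 := fun hh => hne13 (congrArg Subtype.val hh)
  have hb23 : b2 ≠ b3 := fun hh => hne23 (congrArg Subtype.val hh)
  have hx12 : x1 ≠ x2 := fun hh => hb12 (inj.injective (hGinj hh))
  have hx13 : x1 ≠ x3 := fun hh => hb13 (inj.injective (hGinj hh))
  have hx23 : x2 ≠ x3 := fun hh => hb23 (inj.injective (hGinj hh))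
  -- each target has rank at least `rank κ'`
  have key : ∀ b : κ.toSet, ZFSet.rank κ' ≤ ZFSet.rank (b : ZFSet.{u}) →
      G (inj b) ≠ ∅ → G (inj b) ≠ μ → False := by
    intro b hbrk hne he
    -- apply the reflected totality
    have hx0S : G (inj b) ∈ Vclass o' :=
      lt_of_lt_of_le (lt_of_le_of_lt (ZFSet.rank_mono (hGsub _)) hμκ'0) hκ'o'
    have hEX := sat_sfT_elim hS' hT hx0S (by
      rw [e2']
      exact hGsub _)
    obtain ⟨β, hpair⟩ := sat_sfEX_elim hS' hEX
    have e6 : Function.update (Function.update (val2 (Vres A κ') κ') 2 ξ) 6 (G (inj b)) 6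
        = G (inj b) := by simp
    have e0' : Function.update (Function.update (val2 (Vres A κ') κ') 2 ξ) 6 (G (inj b)) 0
        = Vres A κ' := by simp [val2]
    rw [e6, e0'] at hpair
    rw [Vres, ZFSet.mem_sep] at hpair
    obtain ⟨hpA', hprk'⟩ := hpair
    rcases (hmemA _).1 hpA' with hcase | ⟨x, hx, hcase⟩
    · exact he (ZFSet.pair_injective hcase).1
    · obtain ⟨rfl, rfl⟩ := ZFSet.pair_injective hcase
      rw [show F' (G (inj b)) = if G (inj b) = ∅ then ∅ else F (G (inj b)) from rfl,
        if_neg hne, hFG b] at hprk'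
      rw [rank_kpair] at hprk'
      have : ZFSet.rank κ' ≤ max (ZFSet.rank (G (inj b))) (ZFSet.rank (b : ZFSet.{u})) + 1 + 1 :=
        le_trans hbrk (le_trans (le_max_right _ _)
          (le_trans (le_self_add) (le_self_add)))
      exact absurd hprk' (not_lt.2 this)
  -- one of the three works
  have hrb1 : ZFSet.rank κ' ≤ ZFSet.rank ((b1 : ZFSet.{u})) := le_refl _
  have hrb2 : ZFSet.rank κ' ≤ ZFSet.rank ((b2 : ZFSet.{u})) := by
    show ZFSet.rank κ' ≤ ZFSet.rank (insert κ' κ')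
    rw [hrt2]
    exact le_self_add
  have hrb3 : ZFSet.rank κ' ≤ ZFSet.rank ((b3 : ZFSet.{u})) := by
    show ZFSet.rank κ' ≤ ZFSet.rank (insert (insert κ' κ') (insert κ' κ'))
    rw [hrt3]
    exact le_trans (le_self_add) (le_self_add)
  by_cases h1 : x1 ≠ ∅ ∧ x1 ≠ μ
  · exact key b1 hrb1 h1.1 h1.2
  by_cases h2 : x2 ≠ ∅ ∧ x2 ≠ μ
  · exact key b2 hrb2 h2.1 h2.2
  by_cases h3 : x3 ≠ ∅ ∧ x3 ≠ μ
  · exact key b3 hrb3 h3.1 h3.2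
  push_neg at h1 h2 h3
  by_cases he1 : x1 = ∅
  · by_cases he2 : x2 = ∅
    · exact hx12 (he1.trans he2.symm)
    · have hm2 : x2 = μ := h2 he2
      by_cases he3 : x3 = ∅
      · exact hx13 (he1.trans he3.symm)
      · exact hx23 (hm2.trans (h3 he3).symm)
  · have hm1 : x1 = μ := h1 he1
    by_cases he3 : x3 = ∅
    · by_cases he2 : x2 = ∅
      · exact hx23 (he2.trans he3.symm)
      · exact hx12 (hm1.trans (h2 he2).symm)
    · exact hx13 (hm1.trans (h3 he3).symm)
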